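/- arXiv:1407.2504 — 2 statements merged into one kernel-verified Lean document; each statement's English description precedes it below -/
import Mathlib

section
/- Let (K,d) be a compact metric space, T' > 0, let u : [0,T']×K → ℝ be bounded upper semicontinuous, v : [0,T']×K → ℝ bounded lower semicontinuous, and σ : K×K → [0,∞) continuous. For ε > 0 let (t_ε,x_ε,y_ε) be a maximum point over [0,T']×K×K of Φ_ε(t,x,y) = u(t,x) − v(t,y) − σ(x,y) − d(x,y)²/(2ε). Assume in addition that there exists a maximum point (t₀,x₀) of (t,x) ↦ u(t,x) − v(t,x) over [0,T']×K with σ(x₀,x₀) = 0. Then every limit point (t̂,x̂,ŷ) of the maximizers (t_ε,x_ε,y_ε) as ε → 0 satisfies x̂ = ŷ, σ(x̂,x̂) = 0, and u(t̂,x̂) − v(t̂,x̂) = max over [0,T']×K of (u − v). In particular x̂ belongs to the set {x ∈ K : σ(x,x) = 0}. -/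
open Set Filter Topology

/-- The penalized functional `Φ_ε(t,x,y) = u(t,x) - v(t,y) - σ(x,y) - d(x,y)²/(2ε)`. -/
noncomputable def Phi {K : Type*} [MetricSpace K] (u v : ℝ × K → ℝ) (σ : K × K → ℝ)
    (ε : ℝ) (q : ℝ × K × K) : ℝ :=
  u (q.1, q.2.1) - v (q.1, q.2.2) - σ (q.2.1, q.2.2) - dist q.2.1 q.2.2 ^ 2 / (2 * ε)

/-- Second part of the penalization lemma: if `(t₀,x₀)` maximizes `u - v` on
`[0,T'] × K` and `σ(x₀,x₀) = 0`, then every limit point `(t̂,x̂,ŷ)` of the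
penalized maximizers as `ε → 0` satisfies `x̂ = ŷ`, `σ(x̂,x̂) = 0`, and
`u(t̂,x̂) - v(t̂,x̂)` equals the maximum of `u - v`; in particular `x̂` lies in
`{x : σ(x,x) = 0}`. -/
theorem stmt_2 {K : Type*} [MetricSpace K] [CompactSpace K]
    (T' : ℝ) (hT' : 0 < T')
    (u v : ℝ × K → ℝ)
    (hu : UpperSemicontinuousOn u (Icc 0 T' ×ˢ (univ : Set K)))
    (hv : LowerSemicontinuousOn v (Icc 0 T' ×ˢ (univ : Set K)))
    (Cb : ℝ) (hub : ∀ p, |u p| ≤ Cb) (hvb : ∀ p, |v p| ≤ Cb)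
    (σ : K × K → ℝ) (hσc : Continuous σ) (hσ0 : ∀ p, 0 ≤ σ p)
    (p : ℝ → ℝ × K × K)
    (hpmem : ∀ ε > 0, (p ε).1 ∈ Icc (0 : ℝ) T')
    (hpmax : ∀ ε > 0, ∀ q : ℝ × K × K, q.1 ∈ Icc (0 : ℝ) T' →
      Phi u v σ ε q ≤ Phi u v σ ε (p ε))
    (t₀ : ℝ) (x₀ : K) (ht₀ : t₀ ∈ Icc (0 : ℝ) T')
    (hmax : ∀ t ∈ Icc (0 : ℝ) T', ∀ x : K,
      u (t, x) - v (t, x) ≤ u (t₀, x₀) - v (t₀, x₀))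
    (hσx₀ : σ (x₀, x₀) = 0) :
    ∀ εj : ℕ → ℝ, (∀ j, 0 < εj j) → Tendsto εj atTop (𝓝 0) →
      ∀ q : ℝ × K × K, Tendsto (fun j => p (εj j)) atTop (𝓝 q) →
        q.2.1 = q.2.2 ∧ σ (q.2.1, q.2.1) = 0 ∧
          u (q.1, q.2.1) - v (q.1, q.2.1) = u (t₀, x₀) - v (t₀, x₀) ∧
          q.2.1 ∈ {x : K | σ (x, x) = 0} := by
  intro εj hεj hεlim q hq
  set M₀ := u (t₀, x₀) - v (t₀, x₀) with hM₀
  -- component convergences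
  have ht : Tendsto (fun j => (p (εj j)).1) atTop (𝓝 q.1) :=
    (continuous_fst.tendsto q).comp hq
  have hx : Tendsto (fun j => (p (εj j)).2.1) atTop (𝓝 q.2.1) :=
    ((continuous_fst.comp continuous_snd).tendsto q).comp hq
  have hy : Tendsto (fun j => (p (εj j)).2.2) atTop (𝓝 q.2.2) :=
    ((continuous_snd.comp continuous_snd).tendsto q).comp hq
  have hq1 : q.1 ∈ Icc (0 : ℝ) T' :=
    isClosed_Icc.mem_of_tendsto ht (Eventually.of_forall fun j => hpmem _ (hεj j))
  -- key inequality
  have key : ∀ j, M₀ ≤ Phi u v σ (εj j) (p (εj j)) := by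
    intro j
    have h := hpmax (εj j) (hεj j) (t₀, x₀, x₀) ht₀
    simpa [Phi, hσx₀, hM₀] using h
  have key2 : ∀ j, M₀ ≤ u ((p (εj j)).1, (p (εj j)).2.1) - v ((p (εj j)).1, (p (εj j)).2.2)
      - σ ((p (εj j)).2.1, (p (εj j)).2.2)
      - dist (p (εj j)).2.1 (p (εj j)).2.2 ^ 2 / (2 * εj j) := key
  -- distance squared bound
  have hdistsq : ∀ j, dist (p (εj j)).2.1 (p (εj j)).2.2 ^ 2 ≤ 2 * εj j * (2 * Cb + |M₀|) := by
    intro j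
    have h := key2 j
    have h1 : |u ((p (εj j)).1, (p (εj j)).2.1)| ≤ Cb := hub _
    have h2 : |v ((p (εj j)).1, (p (εj j)).2.2)| ≤ Cb := hvb _
    have h3 : 0 ≤ σ ((p (εj j)).2.1, (p (εj j)).2.2) := hσ0 _
    have hε : 0 < 2 * εj j := by linarith [hεj j]
    have h1' := abs_le.1 h1
    have h2' := abs_le.1 h2
    have hM := neg_abs_le M₀
    have h4 : dist (p (εj j)).2.1 (p (εj j)).2.2 ^ 2 / (2 * εj j) ≤ 2 * Cb + |M₀| := by
      linarith [h1'.1, h1'.2, h2'.1, h2'.2]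
    calc dist (p (εj j)).2.1 (p (εj j)).2.2 ^ 2
        = dist (p (εj j)).2.1 (p (εj j)).2.2 ^ 2 / (2 * εj j) * (2 * εj j) := by
          rw [div_mul_cancel₀ _ (ne_of_gt hε)]
      _ ≤ (2 * Cb + |M₀|) * (2 * εj j) := by
          apply mul_le_mul_of_nonneg_right h4 (le_of_lt hε)
      _ = 2 * εj j * (2 * Cb + |M₀|) := by ring
  -- dist squared tends to 0
  have hCb : 0 ≤ Cb := le_trans (abs_nonneg _) (hub (t₀, x₀))
  have hd0 : Tendsto (fun j => dist (p (εj j)).2.1 (p (εj j)).2.2 ^ 2) atTop (𝓝 0) := by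
    have hlim : Tendsto (fun j => 2 * εj j * (2 * Cb + |M₀|)) atTop (𝓝 0) := by
      have := (hεlim.const_mul 2).mul_const (2 * Cb + |M₀|)
      simpa using this
    exact squeeze_zero (fun j => sq_nonneg _) hdistsq hlim
  have hdq : Tendsto (fun j => dist (p (εj j)).2.1 (p (εj j)).2.2 ^ 2) atTop
      (𝓝 (dist q.2.1 q.2.2 ^ 2)) := (hx.dist hy).pow 2
  have heq : q.2.1 = q.2.2 := by
    have h0 : dist q.2.1 q.2.2 ^ 2 = 0 := tendsto_nhds_unique hdq hd0
    have : dist q.2.1 q.2.2 = 0 := by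
      have := sq_eq_zero_iff.1 h0
      exact this
    exact dist_eq_zero.1 this
  -- limit inequality via semicontinuity
  have hmemS : ∀ j, ((p (εj j)).1, (p (εj j)).2.1) ∈ Icc (0 : ℝ) T' ×ˢ (univ : Set K) :=
    fun j => ⟨hpmem _ (hεj j), mem_univ _⟩
  have hmemS' : ∀ j, ((p (εj j)).1, (p (εj j)).2.2) ∈ Icc (0 : ℝ) T' ×ˢ (univ : Set K) :=
    fun j => ⟨hpmem _ (hεj j), mem_univ _⟩
  have htx : Tendsto (fun j => ((p (εj j)).1, (p (εj j)).2.1)) atTop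
      (𝓝[Icc (0 : ℝ) T' ×ˢ (univ : Set K)] (q.1, q.2.1)) :=
    tendsto_nhdsWithin_of_tendsto_nhds_of_eventually_within _ (ht.prodMk_nhds hx)
      (Eventually.of_forall hmemS)
  have hty : Tendsto (fun j => ((p (εj j)).1, (p (εj j)).2.2)) atTop
      (𝓝[Icc (0 : ℝ) T' ×ˢ (univ : Set K)] (q.1, q.2.2)) :=
    tendsto_nhdsWithin_of_tendsto_nhds_of_eventually_within _ (ht.prodMk_nhds hy)
      (Eventually.of_forall hmemS')
  have hσlim : Tendsto (fun j => σ ((p (εj j)).2.1, (p (εj j)).2.2)) atTop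
      (𝓝 (σ (q.2.1, q.2.2))) := (hσc.tendsto _).comp (hx.prodMk_nhds hy)
  have hkey3 : M₀ ≤ u (q.1, q.2.1) - v (q.1, q.2.2) - σ (q.2.1, q.2.2) := by
    refine le_of_forall_pos_le_add ?_
    intro δ hδ
    have hδ3 : 0 < δ / 3 := by linarith
    have hU : ∀ᶠ j in atTop, u ((p (εj j)).1, (p (εj j)).2.1) < u (q.1, q.2.1) + δ / 3 :=
      htx.eventually (hu (q.1, q.2.1) ⟨hq1, mem_univ _⟩ _ (by linarith))
    have hV : ∀ᶠ j in atTop, v (q.1, q.2.2) - δ / 3 < v ((p (εj j)).1, (p (εj j)).2.2) :=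
      hty.eventually (hv (q.1, q.2.2) ⟨hq1, mem_univ _⟩ _ (by linarith))
    have hSg : ∀ᶠ j in atTop, σ (q.2.1, q.2.2) - δ / 3 < σ ((p (εj j)).2.1, (p (εj j)).2.2) :=
      hσlim.eventually (eventually_gt_nhds (by linarith))
    obtain ⟨j, h1, h2, h3⟩ := (hU.and (hV.and hSg)).exists
    have h4 := key2 j
    have h5 : 0 ≤ dist (p (εj j)).2.1 (p (εj j)).2.2 ^ 2 / (2 * εj j) :=
      div_nonneg (sq_nonneg _) (by linarith [hεj j])
    linarith
  rw [← heq] at hkey3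
  have hle : u (q.1, q.2.1) - v (q.1, q.2.1) ≤ M₀ := hmax q.1 hq1 q.2.1
  have hσq : σ (q.2.1, q.2.1) = 0 := le_antisymm (by linarith) (hσ0 _)
  refine ⟨heq, hσq, by linarith, hσq⟩
end

section
/- Let n ≥ 1 and let A, B be n×n Hermitian matrices. Let δ > 0, 0 ≤ η < δ and Λ > 0 and assume A ≥ δ·I and A ≤ B + η·I. Then B ≥ (δ−η)·I (in particular B is positive definite) and det A ≤ det(B + η·I). If moreover B ≤ Λ·I, then det(B + η·I) ≤ det B + n·η·(Λ+η)^{n−1}, and hence det A ≤ det B + n·η·(Λ+η)^{n−1}. -/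
open Matrix
open scoped ComplexOrder

lemma auxSmulOnePosDef {n : ℕ} {c : ℝ} (hc : 0 < c) :
    ((c : ℂ) • (1 : Matrix (Fin n) (Fin n) ℂ)).PosDef := by
  have h : (c : ℂ) • (1 : Matrix (Fin n) (Fin n) ℂ) = diagonal (fun _ => (c : ℂ)) := by
    rw [smul_one_eq_diagonal]
  rw [h]
  refine posDef_diagonal_iff.mpr fun i => ?_
  exact_mod_cast hc

lemma auxUnitDot {n : ℕ} {X : Matrix (Fin n) (Fin n) ℂ} (hX : X.IsHermitian) (i : Fin n) :
    dotProduct (star ⇑(hX.eigenvectorBasis i)) ⇑(hX.eigenvectorBasis i) = 1 := by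
  have h := hX.eigenvectorBasis.orthonormal.1 i
  have h2 : (inner ℂ (hX.eigenvectorBasis i) (hX.eigenvectorBasis i) : ℂ) = 1 := by
    rw [inner_self_eq_norm_sq_to_K, h]; norm_num
  rw [← h2, EuclideanSpace.inner_eq_star_dotProduct, dotProduct_comm]

lemma auxEigLe {n : ℕ} {X : Matrix (Fin n) (Fin n) ℂ} (hX : X.IsHermitian) {c : ℝ}
    (h : ((c : ℂ) • (1 : Matrix (Fin n) (Fin n) ℂ) - X).PosSemidef) (i : Fin n) :
    hX.eigenvalues i ≤ c := by
  set v : Fin n → ℂ := ⇑(hX.eigenvectorBasis i) with hv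
  have key := h.re_dotProduct_nonneg v
  have hmv : ((c : ℂ) • (1 : Matrix (Fin n) (Fin n) ℂ) - X) *ᵥ v
      = (c : ℂ) • v - X *ᵥ v := by
    rw [sub_mulVec, smul_mulVec, one_mulVec]
  rw [hmv, dotProduct_sub, dotProduct_smul, auxUnitDot hX i, smul_eq_mul, mul_one,
    map_sub] at key
  have he : RCLike.re (dotProduct (star v) (X *ᵥ v)) = hX.eigenvalues i :=
    (hX.eigenvalues_eq i).symm
  rw [he] at key
  norm_num at key
  linarith

lemma auxEigGe {n : ℕ} {X : Matrix (Fin n) (Fin n) ℂ} (hX : X.IsHermitian) {c : ℝ}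
    (h : (X - (c : ℂ) • (1 : Matrix (Fin n) (Fin n) ℂ)).PosSemidef) (i : Fin n) :
    c ≤ hX.eigenvalues i := by
  set v : Fin n → ℂ := ⇑(hX.eigenvectorBasis i) with hv
  have key := h.re_dotProduct_nonneg v
  have hmv : (X - (c : ℂ) • (1 : Matrix (Fin n) (Fin n) ℂ)) *ᵥ v
      = X *ᵥ v - (c : ℂ) • v := by
    rw [sub_mulVec, smul_mulVec, one_mulVec]
  rw [hmv, dotProduct_sub, dotProduct_smul, auxUnitDot hX i, smul_eq_mul, mul_one,
    map_sub] at key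
  have he : RCLike.re (dotProduct (star v) (X *ᵥ v)) = hX.eigenvalues i :=
    (hX.eigenvalues_eq i).symm
  rw [he] at key
  norm_num at key
  linarith

lemma auxDetRe {n : ℕ} {X : Matrix (Fin n) (Fin n) ℂ} (hX : X.IsHermitian) :
    X.det = ((∏ i, hX.eigenvalues i : ℝ) : ℂ) := by
  rw [hX.det_eq_prod_eigenvalues]; push_cast; rfl

lemma auxDetAddSmulOne {n : ℕ} {X : Matrix (Fin n) (Fin n) ℂ} (hX : X.IsHermitian) (η : ℝ) :
    (X + (η : ℂ) • (1 : Matrix (Fin n) (Fin n) ℂ)).det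
      = ((∏ i, (hX.eigenvalues i + η) : ℝ) : ℂ) := by
  set U : Matrix (Fin n) (Fin n) ℂ := (hX.eigenvectorUnitary : Matrix (Fin n) (Fin n) ℂ) with hUdef
  have hU : U * star U = 1 := (Matrix.mem_unitaryGroup_iff).mp hX.eigenvectorUnitary.2
  have hsm : U * ((η : ℂ) • (1 : Matrix (Fin n) (Fin n) ℂ)) * star U
      = (η : ℂ) • (1 : Matrix (Fin n) (Fin n) ℂ) := by
    rw [Matrix.mul_smul, Matrix.smul_mul, mul_one, hU]
  have hdec : X + (η : ℂ) • (1 : Matrix (Fin n) (Fin n) ℂ)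
      = U * (diagonal (RCLike.ofReal ∘ hX.eigenvalues) + (η : ℂ) • 1) * star U := by
    rw [mul_add, add_mul, hsm]
    congr 1
    exact hX.spectral_theorem
  rw [hdec, det_mul_right_comm, hU, one_mul]
  have hdiag : diagonal (RCLike.ofReal ∘ hX.eigenvalues) + (η : ℂ) • (1 : Matrix (Fin n) (Fin n) ℂ)
      = diagonal (fun i => ((hX.eigenvalues i : ℂ) + (η : ℂ))) := by
    rw [smul_one_eq_diagonal, ← diagonal_add]
    rfl
  rw [hdiag, det_diagonal]
  push_cast
  rfl

open scoped MatrixOrder in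
lemma auxDetMono {n : ℕ} {A M : Matrix (Fin n) (Fin n) ℂ}
    (hA : A.PosSemidef) (hM : M.PosDef) (hMA : (M - A).PosSemidef) :
    A.det.re ≤ M.det.re := by
  classical
  set N : Matrix (Fin n) (Fin n) ℂ := CFC.sqrt M with hNdef
  have hNN : N * N = M := CFC.sqrt_mul_sqrt_self M (Matrix.nonneg_iff_posSemidef.mpr hM.posSemidef)
  have hNH : N.IsHermitian := (Matrix.nonneg_iff_posSemidef.mp (CFC.sqrt_nonneg M)).1
  have hdM : M.det ≠ 0 := hM.det_pos.ne'
  have hdN : IsUnit N.det := by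
    refine isUnit_iff_ne_zero.mpr fun h0 => hdM ?_
    rw [← hNN, det_mul, h0, zero_mul]
  have hNiH : N⁻¹.IsHermitian := hNH.inv
  have hNinv : N⁻¹ *  N = 1 := nonsing_inv_mul N hdN
  have hNinv' : N * N⁻¹ = 1 := mul_nonsing_inv N hdN
  set C : Matrix (Fin n) (Fin n) ℂ := N⁻¹ * A * N⁻¹ with hCdef
  have hCpsd : C.PosSemidef := by
    have := hA.mul_mul_conjTranspose_same N⁻¹
    rwa [hNiH.eq] at this
  have hMid : N⁻¹ * M * N⁻¹ = 1 := by
    rw [← hNN, ← mul_assoc, mul_assoc _ N N⁻¹, hNinv', mul_one, hNinv]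
  have h1C : ((1 : Matrix (Fin n) (Fin n) ℂ) - C).PosSemidef := by
    have := hMA.mul_mul_conjTranspose_same N⁻¹
    rwa [hNiH.eq, Matrix.mul_sub, Matrix.sub_mul, hMid] at this
  have hCH : C.IsHermitian := hCpsd.1
  have hC1 : ∀ i, hCH.eigenvalues i ≤ 1 := by
    intro i
    refine auxEigLe hCH (c := 1) ?_ i
    simpa using h1C
  have hC0 : ∀ i, 0 ≤ hCH.eigenvalues i := hCpsd.eigenvalues_nonneg
  have hcle : ∏ i, hCH.eigenvalues i ≤ 1 :=
    Finset.prod_le_one (fun i _ => hC0 i) (fun i _ => hC1 i)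
  have hdetC : C.det = N.det⁻¹ * A.det * N.det⁻¹ := by
    rw [hCdef, det_mul, det_mul, det_nonsing_inv, Ring.inverse_eq_inv']
  have hdetA : A.det = M.det * C.det := by
    rw [hdetC, ← hNN, det_mul]
    field_simp [hdN.ne_zero]
  have hMre : M.det = ((∏ i, hM.1.eigenvalues i : ℝ) : ℂ) := auxDetRe hM.1
  have hCre : C.det = ((∏ i, hCH.eigenvalues i : ℝ) : ℂ) := auxDetRe hCH
  have hMpos : (0 : ℝ) < ∏ i, hM.1.eigenvalues i := by
    have := hM.det_pos
    rw [hMre] at this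
    exact_mod_cast this
  have : A.det = ((((∏ i, hM.1.eigenvalues i) * ∏ i, hCH.eigenvalues i) : ℝ) : ℂ) := by
    rw [hdetA, hMre, hCre]; push_cast; ring
  rw [this, hMre]
  simp only [Complex.ofReal_re]
  calc (∏ i, hM.1.eigenvalues i) * ∏ i, hCH.eigenvalues i
      ≤ (∏ i, hM.1.eigenvalues i) * 1 :=
        mul_le_mul_of_nonneg_left hcle (le_of_lt hMpos)
    _ = ∏ i, hM.1.eigenvalues i := mul_one _

lemma auxPowSubPow {a b : ℝ} (hb : 0 ≤ b) (hba : b ≤ a) :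
    ∀ m : ℕ, a ^ m - b ^ m ≤ m * (a - b) * a ^ (m - 1)
  | 0 => by simp
  | (m + 1) => by
    have ha : 0 ≤ a := le_trans hb hba
    have ih := auxPowSubPow hb hba m
    have key : a ^ (m + 1) - b ^ (m + 1) = a * (a ^ m - b ^ m) + (a - b) * b ^ m := by ring
    have h1 : a * (a ^ m - b ^ m) ≤ m * (a - b) * a ^ m := by
      rcases Nat.eq_zero_or_pos m with hm | hm
      · subst hm; simp
      · have : a * (a ^ m - b ^ m) ≤ a * (m * (a - b) * a ^ (m - 1)) :=
          mul_le_mul_of_nonneg_left ih ha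
        calc a * (a ^ m - b ^ m) ≤ a * (m * (a - b) * a ^ (m - 1)) := this
          _ = m * (a - b) * (a ^ (m - 1) * a) := by ring
          _ = m * (a - b) * a ^ m := by
              rw [← pow_succ, Nat.sub_add_cancel hm]
    have h2 : (a - b) * b ^ m ≤ (a - b) * a ^ m :=
      mul_le_mul_of_nonneg_left (pow_le_pow_left₀ hb hba m) (by linarith)
    calc a ^ (m + 1) - b ^ (m + 1) = a * (a ^ m - b ^ m) + (a - b) * b ^ m := key
      _ ≤ m * (a - b) * a ^ m + (a - b) * a ^ m := add_le_add h1 h2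
      _ = (m + 1 : ℕ) * (a - b) * a ^ m := by push_cast; ring
      _ = (m + 1 : ℕ) * (a - b) * a ^ ((m + 1) - 1) := by norm_num

lemma auxProdIneq {ι : Type*} (s : Finset ι) (μ : ι → ℝ) (Λ η : ℝ) (hΛ : 0 ≤ Λ) (hη : 0 ≤ η)
    (h : ∀ i ∈ s, 0 ≤ μ i ∧ μ i ≤ Λ) :
    ∏ i ∈ s, (μ i + η) ≤ ∏ i ∈ s, μ i + ((Λ + η) ^ s.card - Λ ^ s.card) := by
  classical
  induction s using Finset.induction_on with
  | empty => simp
  | @insert a s ha ih =>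
    have hmem : ∀ i ∈ s, 0 ≤ μ i ∧ μ i ≤ Λ := fun i hi => h i (Finset.mem_insert_of_mem hi)
    have hha := h a (Finset.mem_insert_self a s)
    have ih' := ih hmem
    have hQ'le : ∏ i ∈ s, (μ i + η) ≤ (Λ + η) ^ s.card := by
      rw [← Finset.prod_const]
      refine Finset.prod_le_prod (fun i hi => by linarith [(hmem i hi).1])
        (fun i hi => by linarith [(hmem i hi).2])
    have hQ'nn : 0 ≤ ∏ i ∈ s, (μ i + η) :=
      Finset.prod_nonneg fun i hi => by linarith [(hmem i hi).1]
    have hQnn : 0 ≤ ∏ i ∈ s, μ i := Finset.prod_nonneg fun i hi => (hmem i hi).1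
    rw [Finset.prod_insert ha, Finset.prod_insert ha, Finset.card_insert_of_notMem ha]
    have hdiff : ∏ i ∈ s, (μ i + η) - ∏ i ∈ s, μ i ≤ (Λ + η) ^ s.card - Λ ^ s.card := by
      linarith
    have step : (μ a + η) * ∏ i ∈ s, (μ i + η)
        = μ a * ∏ i ∈ s, μ i + μ a * (∏ i ∈ s, (μ i + η) - ∏ i ∈ s, μ i)
          + η * ∏ i ∈ s, (μ i + η) := by ring
    have h1 : μ a * (∏ i ∈ s, (μ i + η) - ∏ i ∈ s, μ i) ≤ Λ * ((Λ + η) ^ s.card - Λ ^ s.card) := by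
      have hnn : 0 ≤ ∏ i ∈ s, (μ i + η) - ∏ i ∈ s, μ i := by
        have : ∏ i ∈ s, μ i ≤ ∏ i ∈ s, (μ i + η) :=
          Finset.prod_le_prod (fun i hi => (hmem i hi).1) (fun i hi => by linarith)
        linarith
      exact mul_le_mul hha.2 hdiff hnn hΛ
    have h2 : η * ∏ i ∈ s, (μ i + η) ≤ η * (Λ + η) ^ s.card :=
      mul_le_mul_of_nonneg_left hQ'le hη
    have : Λ * ((Λ + η) ^ s.card - Λ ^ s.card) + η * (Λ + η) ^ s.card
        = (Λ + η) ^ (s.card + 1) - Λ ^ (s.card + 1) := by ring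
    linarith [step, h1, h2]

/-- Determinant comparison with a small error term: if `A ≥ δ·I` and
`A ≤ B + η·I` with `0 ≤ η < δ`, then `B ≥ (δ-η)·I` (so `B` is positive
definite) and `det A ≤ det (B + η·I)`; if moreover `B ≤ Λ·I` then
`det (B + η·I) ≤ det B + n·η·(Λ+η)^{n-1}`, hence
`det A ≤ det B + n·η·(Λ+η)^{n-1}`. -/
theorem stmt_5 {n : ℕ} (hn : 1 ≤ n)
    (A B : Matrix (Fin n) (Fin n) ℂ) (hA : A.IsHermitian) (hB : B.IsHermitian)
    (δ η Λ : ℝ) (hδ : 0 < δ) (hη0 : 0 ≤ η) (hηδ : η < δ) (hΛ : 0 < Λ)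
    (hAδ : (A - (δ : ℂ) • (1 : Matrix (Fin n) (Fin n) ℂ)).PosSemidef)
    (hAB : (B + (η : ℂ) • (1 : Matrix (Fin n) (Fin n) ℂ) - A).PosSemidef) :
    (B - ((δ - η : ℝ) : ℂ) • (1 : Matrix (Fin n) (Fin n) ℂ)).PosSemidef ∧
    B.PosDef ∧
    A.det.re ≤ (B + (η : ℂ) • (1 : Matrix (Fin n) (Fin n) ℂ)).det.re ∧
    (((Λ : ℂ) • (1 : Matrix (Fin n) (Fin n) ℂ) - B).PosSemidef →
      (B + (η : ℂ) • (1 : Matrix (Fin n) (Fin n) ℂ)).det.re ≤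
          B.det.re + n * η * (Λ + η) ^ (n - 1) ∧
        A.det.re ≤ B.det.re + n * η * (Λ + η) ^ (n - 1)) := by
  have hδη : (0 : ℝ) < δ - η := by linarith
  -- Part 1
  have hBpsd : (B - ((δ - η : ℝ) : ℂ) • (1 : Matrix (Fin n) (Fin n) ℂ)).PosSemidef := by
    have heq : B - ((δ - η : ℝ) : ℂ) • (1 : Matrix (Fin n) (Fin n) ℂ)
        = (B + (η : ℂ) • 1 - A) + (A - (δ : ℂ) • 1) := by
      push_cast
      module
    rw [heq]
    exact hAB.add hAδ
  -- Part 2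
  have hBpos : B.PosDef := by
    have heq : B = (B - ((δ - η : ℝ) : ℂ) • (1 : Matrix (Fin n) (Fin n) ℂ))
        + ((δ - η : ℝ) : ℂ) • (1 : Matrix (Fin n) (Fin n) ℂ) := (sub_add_cancel _ _).symm
    rw [heq]
    exact Matrix.PosDef.posSemidef_add hBpsd (auxSmulOnePosDef hδη)
  -- A is positive definite
  have hApos : A.PosDef := by
    have heq : A = (A - (δ : ℂ) • (1 : Matrix (Fin n) (Fin n) ℂ))
        + (δ : ℂ) • (1 : Matrix (Fin n) (Fin n) ℂ) := (sub_add_cancel _ _).symm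
    rw [heq]
    exact Matrix.PosDef.posSemidef_add hAδ (auxSmulOnePosDef hδ)
  -- M := B + η • 1 is positive definite
  have hMpos : (B + (η : ℂ) • (1 : Matrix (Fin n) (Fin n) ℂ)).PosDef := by
    have heq : B + (η : ℂ) • (1 : Matrix (Fin n) (Fin n) ℂ)
        = (B + (η : ℂ) • (1 : Matrix (Fin n) (Fin n) ℂ) - A) + A := (sub_add_cancel _ _).symm
    rw [heq]
    exact Matrix.PosDef.posSemidef_add hAB hApos
  -- Part 3
  have part3 : A.det.re ≤ (B + (η : ℂ) • (1 : Matrix (Fin n) (Fin n) ℂ)).det.re :=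
    auxDetMono hApos.posSemidef hMpos hAB
  refine ⟨hBpsd, hBpos, part3, fun hBΛ => ?_⟩
  -- Part 4
  have hμ0 : ∀ i, 0 ≤ hB.eigenvalues i := fun i => (hBpos.eigenvalues_pos i).le
  have hμΛ : ∀ i, hB.eigenvalues i ≤ Λ := fun i => auxEigLe hB hBΛ i
  have hMdet : (B + (η : ℂ) • (1 : Matrix (Fin n) (Fin n) ℂ)).det
      = ((∏ i, (hB.eigenvalues i + η) : ℝ) : ℂ) := auxDetAddSmulOne hB η
  have hBdet : B.det = ((∏ i, hB.eigenvalues i : ℝ) : ℂ) := auxDetRe hB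
  have hMre : (B + (η : ℂ) • (1 : Matrix (Fin n) (Fin n) ℂ)).det.re
      = ∏ i, (hB.eigenvalues i + η) := by rw [hMdet, Complex.ofReal_re]
  have hBre : B.det.re = ∏ i, hB.eigenvalues i := by rw [hBdet, Complex.ofReal_re]
  have hprod : ∏ i, (hB.eigenvalues i + η)
      ≤ ∏ i, hB.eigenvalues i + ((Λ + η) ^ n - Λ ^ n) := by
    have := auxProdIneq Finset.univ hB.eigenvalues Λ η hΛ.le hη0
      (fun i _ => ⟨hμ0 i, hμΛ i⟩)
    simpa using this
  have hpow : (Λ + η) ^ n - Λ ^ n ≤ n * η * (Λ + η) ^ (n - 1) := by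
    have := auxPowSubPow hΛ.le (by linarith : Λ ≤ Λ + η) n
    have heq : (n : ℝ) * (Λ + η - Λ) * (Λ + η) ^ (n - 1) = n * η * (Λ + η) ^ (n - 1) := by
      ring_nf
    linarith [this, heq.le]
  have first : (B + (η : ℂ) • (1 : Matrix (Fin n) (Fin n) ℂ)).det.re
      ≤ B.det.re + n * η * (Λ + η) ^ (n - 1) := by
    rw [hMre, hBre]
    linarith
  exact ⟨first, le_trans part3 first⟩
end
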